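/- Let M be a connected Hausdorff topological space with at least two points, let H be a complex Hilbert space, and let q : M → B(H) be an injective map, continuous for the weak operator topology, such that each q(x) is a rank-one orthogonal projection. Then there exist x, y ∈ M with q(x)·q(y) ≠ q(y)·q(x); in particular the *-algebra generated by the image of q is noncommutative. -/

import Mathlib

open MeasureTheory
open scoped InnerProductSpace

/-- If `M` is a connected Hausdorff space with at least two points and
`q : M → B(H)` is an injective WOT-continuous map whose values are rank-one orthogonal
projections, then some two of these projections fail to commute. -/
theorem exists_noncommuting_coherent_states
    {M : Type*} [TopologicalSpace M] [ConnectedSpace M] [T2Space M]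
    {H : Type*} [NormedAddCommGroup H] [InnerProductSpace ℂ H] [CompleteSpace H]
    (hM : ∃ x y : M, x ≠ y)
    (q : M → (H →L[ℂ] H))
    (hq_inj : Function.Injective q)
    (hq_cont : ∀ v w : H, Continuous fun x => ⟪v, q x w⟫_ℂ)
    (hq_rank1 : ∀ x, ∃ u : H, ‖u‖ = 1 ∧ ∀ v, q x v = ⟪u, v⟫_ℂ • u) :
    ∃ x y : M, q x * q y ≠ q y * q x := by
  by_contra hcon
  push_neg at hcon
  obtain ⟨x0, y0, hxy⟩ := hM
  obtain ⟨u, hu, hqu⟩ := hq_rank1 x0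
  have huu : ⟪u, u⟫_ℂ = 1 := by
    rw [inner_self_eq_norm_sq_to_K, hu]; norm_num
  -- Key: for x ≠ x0, the projections are orthogonal
  have key : ∀ x, x ≠ x0 → ⟪u, q x u⟫_ℂ = 0 := by
    intro x hx
    obtain ⟨w, hw, hqw⟩ := hq_rank1 x
    have hww : ⟪w, w⟫_ℂ = 1 := by
      rw [inner_self_eq_norm_sq_to_K, hw]; norm_num
    have heq : (q x0 * q x) w = (q x * q x0) w := by rw [hcon]
    have h1 : (q x0 * q x) w = ⟪u, w⟫_ℂ • u := by
      simp [ContinuousLinearMap.mul_apply, hqw, hww, hqu, hw]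
    have h2 : (q x * q x0) w = ⟪u, w⟫_ℂ • (⟪w, u⟫_ℂ • w) := by
      simp only [ContinuousLinearMap.mul_apply, hqu w, hqw, inner_smul_right,
        mul_smul]
    by_cases hc0 : ⟪u, w⟫_ℂ = 0
    · rw [hqw, inner_smul_right, hc0, mul_zero]
    · exfalso
      have hue : u = ⟪w, u⟫_ℂ • w := by
        have h3 := heq
        rw [h1, h2] at h3
        exact smul_right_injective H hc0 h3
      have hna : ‖⟪w, u⟫_ℂ‖ = 1 := by
        have h4 := congrArg norm hue
        rw [norm_smul, hw, mul_one, hu] at h4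
        exact h4.symm
      have hconjmul : (starRingEnd ℂ) ⟪w, u⟫_ℂ * ⟪w, u⟫_ℂ = 1 := by
        rw [RCLike.conj_mul, hna]; norm_num
      have hqeq : q x0 = q x := by
        ext v
        rw [hqu, hqw]
        conv_lhs => rw [hue]
        rw [inner_smul_left, smul_smul, mul_right_comm, hconjmul, one_mul]
      exact hx (hq_inj hqeq.symm)
  -- The set {x0} is clopen, contradicting connectedness
  have hsingleton : {x : M | x = x0} = (fun x => ⟪u, q x u⟫_ℂ) ⁻¹' {0}ᶜ := by
    ext x
    simp only [Set.mem_setOf_eq, Set.mem_preimage, Set.mem_compl_iff,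
      Set.mem_singleton_iff]
    constructor
    · intro h; subst h
      rw [hqu, inner_smul_right, huu, mul_one]
      exact one_ne_zero
    · intro h
      by_contra hne
      exact h (key x hne)
  have hopen : IsOpen {x : M | x = x0} := by
    rw [hsingleton]
    exact isOpen_compl_singleton.preimage (hq_cont u u)
  have hclosed : IsClosed {x : M | x = x0} := by
    have : {x : M | x = x0} = {x0} := rfl
    rw [this]; exact isClosed_singleton
  rcases isClopen_iff.mp ⟨hclosed, hopen⟩ with h | h
  · exact (Set.eq_empty_iff_forall_notMem.mp h x0) rfl
  · have hy : y0 = x0 := Set.eq_univ_iff_forall.mp h y0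
    exact hxy hy.symm
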